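/- For every approval instance, every committee W with |W| = k that maximizes the PAV score among all committees of size k is (ℓ−1)-representative: for every natural number ℓ ≥ 1, every candidate c ∈ C∖W, and every group N' ⊆ N_c with |N'| ≥ ℓ·n/k, the average (1/|N'|)·Σ_{i∈N'} |A_i ∩ W| is at least ℓ−1. -/
import Mathlib

open Finset

/-- The PAV score of a committee `W`: `∑_{i ∈ N} ∑_{j=1}^{|A i ∩ W|} 1/j`. -/
def pavScore {V C : Type*} [Fintype V] [DecidableEq C]
    (A : V → Finset C) (W : Finset C) : ℚ :=
  ∑ i : V, ∑ j ∈ Finset.range ((A i ∩ W).card), (1 : ℚ) / (j + 1)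

lemma pav_insert {V C : Type*} [Fintype V] [DecidableEq C]
    (A : V → Finset C) (W : Finset C) (c : C) (hc : c ∉ W) :
    pavScore A (insert c W) =
      pavScore A W + ∑ i : V, if c ∈ A i then (1:ℚ)/((A i ∩ W).card + 1) else 0 := by
  unfold pavScore
  rw [← Finset.sum_add_distrib]
  refine Finset.sum_congr rfl fun i _ => ?_
  by_cases h : c ∈ A i
  · have he : A i ∩ insert c W = insert c (A i ∩ W) := by
      ext x
      simp only [Finset.mem_inter, Finset.mem_insert]
      constructor
      · rintro ⟨hx, rfl | hw⟩
        · exact Or.inl rfl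
        · exact Or.inr ⟨hx, hw⟩
      · rintro (rfl | ⟨hx, hw⟩)
        · exact ⟨h, Or.inl rfl⟩
        · exact ⟨hx, Or.inr hw⟩
    rw [he, Finset.card_insert_of_notMem (fun hx => hc (Finset.mem_inter.1 hx).2),
      Finset.sum_range_succ]
    simp [h]
  · have he : A i ∩ insert c W = A i ∩ W := by
      ext x; simp only [Finset.mem_inter, Finset.mem_insert]
      constructor
      · rintro ⟨hx, rfl | hx2⟩
        · exact absurd hx h
        · exact ⟨hx, hx2⟩
      · rintro ⟨hx, hx2⟩; exact ⟨hx, Or.inr hx2⟩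
    rw [he]; simp [h]

lemma pav_erase {V C : Type*} [Fintype V] [DecidableEq C]
    (A : V → Finset C) (W : Finset C) (w : C) (hw : w ∈ W) :
    pavScore A (W.erase w) =
      pavScore A W - ∑ i : V, if w ∈ A i then (1:ℚ)/((A i ∩ W).card) else 0 := by
  unfold pavScore
  rw [← Finset.sum_sub_distrib]
  refine Finset.sum_congr rfl fun i _ => ?_
  by_cases h : w ∈ A i
  · have h1 : A i ∩ W.erase w = (A i ∩ W).erase w := by
      ext x; simp only [Finset.mem_inter, Finset.mem_erase]; tauto
    have hmem : w ∈ A i ∩ W := Finset.mem_inter.2 ⟨h, hw⟩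
    have hpos : 1 ≤ (A i ∩ W).card := Finset.card_pos.2 ⟨w, hmem⟩
    have h2 : (A i ∩ W).card = ((A i ∩ W).erase w).card + 1 := by
      rw [Finset.card_erase_of_mem hmem]; omega
    have h3 : ∑ j ∈ Finset.range ((A i ∩ W).card), (1:ℚ)/(j+1)
        = (∑ j ∈ Finset.range (((A i ∩ W).erase w).card), (1:ℚ)/(j+1))
          + 1/((A i ∩ W).card : ℚ) := by
      rw [h2, Finset.sum_range_succ]
      congr 1
      push_cast
      ring
    rw [h1, h3]
    simp [h]
  · have h1 : A i ∩ W.erase w = A i ∩ W := by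
      ext x; simp only [Finset.mem_inter, Finset.mem_erase]
      constructor
      · rintro ⟨hx, _, hx2⟩; exact ⟨hx, hx2⟩
      · rintro ⟨hx, hx2⟩
        exact ⟨hx, fun hxw => h (hxw ▸ hx), hx2⟩
    rw [h1]; simp [h]

/-- every committee of size `k` maximizing the PAV score among all
committees of size `k` is `(ℓ−1)`-representative: for every `ℓ ≥ 1`, candidate
`c ∉ W`, and group `N' ⊆ N_c` with `|N'| ≥ ℓ·n/k`, the average
`(1/|N'|)·∑_{i∈N'} |A i ∩ W|` is at least `ℓ − 1`. -/
theorem pav_is_ell_minus_one_representative {V C : Type*} [Fintype V] [Fintype C]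
    [DecidableEq V] [DecidableEq C]
    (A : V → Finset C) (k : ℕ) (W : Finset C)
    (hn : 1 ≤ Fintype.card V) (hk1 : 1 ≤ k) (hk2 : k ≤ Fintype.card C)
    (hWcard : W.card = k)
    (hmax : ∀ W' : Finset C, W'.card = k → pavScore A W' ≤ pavScore A W) :
    ∀ ℓ : ℕ, 1 ≤ ℓ → ∀ c : C, c ∉ W → ∀ N' : Finset V,
      (∀ i ∈ N', c ∈ A i) → (ℓ : ℝ) * (Fintype.card V) / k ≤ N'.card →
      (ℓ : ℝ) - 1 ≤ (1 / (N'.card : ℝ)) * ∑ i ∈ N', ((A i ∩ W).card : ℝ) := by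
  intro ℓ hℓ c hc N' hNc hNcard
  set n := Fintype.card V with hn_def
  set W' := insert c W with hW'
  have hkR : (0:ℝ) < k := by exact_mod_cast hk1
  have hnR : (0:ℝ) < n := by exact_mod_cast hn
  have hℓR : (1:ℝ) ≤ ℓ := by exact_mod_cast hℓ
  have hℓpos : (0:ℝ) < ℓ := by linarith
  have hN'pos : (0:ℝ) < N'.card := by
    refine lt_of_lt_of_le ?_ hNcard
    positivity
  have hWne : W.Nonempty := Finset.card_pos.1 (by omega)
  -- total loss bound
  have hsumloss :
      ∑ w ∈ W, ∑ i : V, (if w ∈ A i then (1:ℚ)/((A i ∩ W').card) else 0) ≤ (n : ℚ) := by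
    rw [Finset.sum_comm]
    have hper : ∀ i : V,
        ∑ w ∈ W, (if w ∈ A i then (1:ℚ)/((A i ∩ W').card) else 0) ≤ 1 := by
      intro i
      have hrw : ∑ w ∈ W, (if w ∈ A i then (1:ℚ)/((A i ∩ W').card) else 0)
          = ((W ∩ A i).card : ℚ) * (1/((A i ∩ W').card)) := by
        rw [Finset.sum_ite_mem, Finset.sum_const, nsmul_eq_mul]
      rw [hrw]
      rcases Nat.eq_zero_or_pos (A i ∩ W').card with h0 | hpos
      · rw [h0]; simp
      · have hsub : W ∩ A i ⊆ A i ∩ W' := by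
          intro x hx
          rw [Finset.mem_inter] at hx ⊢
          exact ⟨hx.2, Finset.mem_insert_of_mem hx.1⟩
        have hle : ((W ∩ A i).card : ℚ) ≤ ((A i ∩ W').card : ℚ) := by
          exact_mod_cast Finset.card_le_card hsub
        have hypos : (0:ℚ) < ((A i ∩ W').card : ℚ) := by exact_mod_cast hpos
        rw [mul_one_div, div_le_one hypos]
        exact hle
    calc ∑ i : V, ∑ w ∈ W, (if w ∈ A i then (1:ℚ)/((A i ∩ W').card) else 0)
        ≤ ∑ _i : V, (1:ℚ) := Finset.sum_le_sum (fun i _ => hper i)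
      _ = (n : ℚ) := by simp [hn_def]
  -- choose a cheap w
  have hloss_exists : ∃ w ∈ W,
      ∑ i : V, (if w ∈ A i then (1:ℚ)/((A i ∩ W').card) else 0) ≤ (n:ℚ)/k := by
    apply Finset.exists_le_of_sum_le hWne
    calc ∑ w ∈ W, ∑ i : V, (if w ∈ A i then (1:ℚ)/((A i ∩ W').card) else 0)
        ≤ (n:ℚ) := hsumloss
      _ = ∑ _w ∈ W, (n:ℚ)/k := by
          rw [Finset.sum_const, hWcard, nsmul_eq_mul]
          have hk0 : (k:ℚ) ≠ 0 := by positivity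
          field_simp
  obtain ⟨w, hwW, hwloss⟩ := hloss_exists
  have hwW' : w ∈ W' := Finset.mem_insert_of_mem hwW
  have hW'card : W'.card = k + 1 := by
    rw [hW', Finset.card_insert_of_notMem hc, hWcard]
  have hW''card : (W'.erase w).card = k := by
    rw [Finset.card_erase_of_mem hwW', hW'card]
    omega
  -- gain ≤ n/k
  have hgain_le : ∑ i : V, (if c ∈ A i then (1:ℚ)/((A i ∩ W).card + 1) else 0)
      ≤ (n:ℚ)/k := by
    have h1 := pav_insert A W c hc
    have h2 := pav_erase A W' w hwW'
    have h3 := hmax _ hW''card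
    rw [← hW'] at h1
    linarith
  -- restrict to N'
  have hS_le : ∑ i ∈ N', (1:ℚ)/(((A i ∩ W).card : ℚ) + 1) ≤ (n:ℚ)/k := by
    refine le_trans ?_ hgain_le
    calc ∑ i ∈ N', (1:ℚ)/(((A i ∩ W).card : ℚ) + 1)
        = ∑ i ∈ N', (if c ∈ A i then (1:ℚ)/((A i ∩ W).card + 1) else 0) :=
          Finset.sum_congr rfl (fun i hi => by rw [if_pos (hNc i hi)])
      _ ≤ ∑ i : V, (if c ∈ A i then (1:ℚ)/((A i ∩ W).card + 1) else 0) := by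
          refine Finset.sum_le_sum_of_subset_of_nonneg (Finset.subset_univ _) ?_
          intro i _ _
          split
          · positivity
          · exact le_refl 0
  -- move to ℝ
  have hSR : ∑ i ∈ N', (1:ℝ)/(((A i ∩ W).card : ℝ) + 1) ≤ (n:ℝ)/k := by
    have h := (Rat.cast_le (K := ℝ)).2 hS_le
    push_cast at h
    exact h
  -- Cauchy-Schwarz
  have hcauchy : ((N'.card : ℝ))^2
      ≤ (∑ i ∈ N', (1:ℝ)/(((A i ∩ W).card:ℝ)+1))
        * (∑ i ∈ N', (((A i ∩ W).card:ℝ)+1)) := by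
    have h := Finset.sum_sq_le_sum_mul_sum_of_sq_eq_mul N'
      (r := fun _ => (1:ℝ)) (f := fun i => (1:ℝ)/(((A i ∩ W).card:ℝ)+1))
      (g := fun i => ((A i ∩ W).card:ℝ)+1)
      (fun i _ => by positivity) (fun i _ => by positivity)
      (fun i _ => by
        have : (((A i ∩ W).card:ℝ)+1) ≠ 0 := by positivity
        field_simp)
    simpa using h
  set S := ∑ i ∈ N', (1:ℝ)/(((A i ∩ W).card:ℝ)+1) with hS
  set T := ∑ i ∈ N', (((A i ∩ W).card:ℝ)) with hT
  have hTsum : ∑ i ∈ N', (((A i ∩ W).card:ℝ)+1) = T + N'.card := by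
    rw [Finset.sum_add_distrib, Finset.sum_const, nsmul_eq_mul, mul_one]
  have hTnonneg : (0:ℝ) ≤ T + N'.card := by
    have : (0:ℝ) ≤ T := Finset.sum_nonneg (fun i _ => by positivity)
    linarith
  have hℓS : (ℓ:ℝ) * S ≤ N'.card := by
    calc (ℓ:ℝ) * S ≤ (ℓ:ℝ) * ((n:ℝ)/k) :=
          mul_le_mul_of_nonneg_left hSR (le_of_lt hℓpos)
      _ = (ℓ:ℝ) * n / k := by ring
      _ ≤ N'.card := hNcard
  have key : (ℓ:ℝ) * N'.card ≤ T + N'.card := by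
    have h1 : (ℓ:ℝ) * (N'.card:ℝ)^2 ≤ ((ℓ:ℝ) * S) * (T + N'.card) := by
      rw [hTsum] at hcauchy
      calc (ℓ:ℝ) * (N'.card:ℝ)^2 ≤ (ℓ:ℝ) * (S * (T + N'.card)) :=
            mul_le_mul_of_nonneg_left hcauchy (le_of_lt hℓpos)
        _ = ((ℓ:ℝ) * S) * (T + N'.card) := by ring
    have h2 : ((ℓ:ℝ) * S) * (T + N'.card) ≤ (N'.card:ℝ) * (T + N'.card) :=
      mul_le_mul_of_nonneg_right hℓS hTnonneg
    have h3 : (N'.card:ℝ) * ((ℓ:ℝ) * N'.card) ≤ (N'.card:ℝ) * (T + N'.card) := by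
      nlinarith
    exact le_of_mul_le_mul_left h3 hN'pos
  have hgoal : ((ℓ:ℝ) - 1) * N'.card ≤ T := by nlinarith
  have hdiv : (1 / (N'.card : ℝ)) * T = T / N'.card := by ring
  rw [hdiv, le_div_iff₀ hN'pos]
  exact hgoal
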